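/- Let {V_1, …, V_k} be a finite set of unitaries on H whose uniform distribution forms a unitary 1-design, and suppose ‖Ũ − U‖_F² / dim H ≤ ε for unitaries U, Ũ on H. Define on C^k ⊗ H the unitaries V' = Σ_i |i⟩⟨i| ⊗ V_i, V̂' = Σ_i |i⟩⟨i| ⊗ U V_i U†, and U' = V̂'† (I ⊗ Ũ) V'. Then for every unit vector ψ ∈ H, ‖(U' − I ⊗ U)((1/√k) Σ_i |i⟩ ⊗ ψ)‖² ≤ ε. -/

import Mathlib

open Matrix Finset

/-- The block-diagonal operator `∑ i |i⟩⟨i| ⊗ W i` on `C^k ⊗ C^n`. -/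
def ctrlOp {k n : ℕ} (W : Fin k → Matrix (Fin n) (Fin n) ℂ) :
    Matrix (Fin k × Fin n) (Fin k × Fin n) ℂ :=
  fun p q => if p.1 = q.1 then W p.1 p.2 q.2 else 0

lemma ctrlOp_mul {k n : ℕ} (W W' : Fin k → Matrix (Fin n) (Fin n) ℂ) :
    ctrlOp W * ctrlOp W' = ctrlOp (fun i => W i * W' i) := by
  ext ⟨i, j⟩ ⟨i', j'⟩
  simp only [ctrlOp, Matrix.mul_apply, Fintype.sum_prod_type]
  by_cases h : i = i'
  · subst h
    simp [Finset.sum_ite_eq', Matrix.mul_apply]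
  · simp [h]

lemma ctrlOp_conjT {k n : ℕ} (W : Fin k → Matrix (Fin n) (Fin n) ℂ) :
    (ctrlOp W)ᴴ = ctrlOp (fun i => (W i)ᴴ) := by
  ext ⟨i, j⟩ ⟨i', j'⟩
  simp only [ctrlOp, conjTranspose_apply]
  by_cases h : i = i' <;> simp [h, eq_comm, conjTranspose_apply]

lemma ctrlOp_sub {k n : ℕ} (W W' : Fin k → Matrix (Fin n) (Fin n) ℂ) :
    ctrlOp W - ctrlOp W' = ctrlOp (fun i => W i - W' i) := by
  ext ⟨i, j⟩ ⟨i', j'⟩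
  simp only [ctrlOp, Matrix.sub_apply]
  by_cases h : i = i' <;> simp [h]

lemma ctrlOp_mulVec {k n : ℕ} (W : Fin k → Matrix (Fin n) (Fin n) ℂ)
    (v : Fin k × Fin n → ℂ) (i : Fin k) (j : Fin n) :
    (ctrlOp W).mulVec v (i, j) = ∑ j', W i j j' * v (i, j') := by
  simp only [Matrix.mulVec, dotProduct, Fintype.sum_prod_type, ctrlOp]
  rw [Finset.sum_comm]
  simp [Finset.sum_ite_eq']

lemma dual_design {n k : ℕ}
    (V : Fin k → Matrix (Fin n) (Fin n) ℂ)
    (hdesign : ∀ X : Matrix (Fin n) (Fin n) ℂ,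
      ((k : ℂ))⁻¹ • ∑ i, (V i * X * (V i)ᴴ) =
        (X.trace / n) • (1 : Matrix (Fin n) (Fin n) ℂ))
    (X : Matrix (Fin n) (Fin n) ℂ) :
      ((k : ℂ))⁻¹ • ∑ i, ((V i)ᴴ * X * V i) =
        (X.trace / n) • (1 : Matrix (Fin n) (Fin n) ℂ) := by
  ext a b
  have key : ∀ c d : Fin n,
      (k : ℂ)⁻¹ * ∑ i, V i d b * (starRingEnd ℂ) (V i c a)
        = if a = b then (if d = c then (1:ℂ)/n else 0) else 0 := by
    intro c d
    have h := hdesign (Matrix.single b a 1)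
    rw [← Matrix.ext_iff] at h
    have h := h d c
    simp only [Matrix.smul_apply, Matrix.sum_apply, smul_eq_mul] at h
    have h1 : ∀ i, (V i * Matrix.single b a (1:ℂ) * (V i)ᴴ) d c
        = V i d b * (starRingEnd ℂ) (V i c a) := by
      intro i
      simp [Matrix.mul_apply, Matrix.single, conjTranspose_apply,
        Finset.mul_sum, ite_and]
    simp only [h1] at h
    rw [Finset.mul_sum] at h ⊢
    rw [h]
    simp [Matrix.trace, Matrix.one_apply, Matrix.single, Matrix.diag, eq_comm]
    by_cases hab : a = b
    · subst hab
      have hf : (Finset.filter (fun x => a = x) Finset.univ) = {a} := by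
        ext x; simp [eq_comm]
      simp [hf, one_div]
    · have he : (Finset.filter (fun x => b = x ∧ a = x) Finset.univ) = ∅ := by
        ext x
        simp only [Finset.mem_filter, Finset.mem_univ, true_and, Finset.notMem_empty,
          iff_false]
        rintro ⟨h1, h2⟩
        exact hab (h2.trans h1.symm)
      simp [hab, he]
  have expand : ∀ i, ((V i)ᴴ * X * V i) a b
      = ∑ d, ∑ c, (starRingEnd ℂ) (V i c a) * X c d * V i d b := by
    intro i
    simp [Matrix.mul_apply, conjTranspose_apply, Finset.sum_mul]
  simp only [Matrix.smul_apply, Matrix.sum_apply, smul_eq_mul]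
  have step : (k : ℂ)⁻¹ * ∑ i, ((V i)ᴴ * X * V i) a b
      = ∑ d, ∑ c, X c d * ((k : ℂ)⁻¹ * ∑ i, V i d b * (starRingEnd ℂ) (V i c a)) := by
    simp only [expand, Finset.mul_sum]
    rw [Finset.sum_comm]
    refine Finset.sum_congr rfl fun d _ => ?_
    rw [Finset.sum_comm]
    refine Finset.sum_congr rfl fun c _ => ?_
    refine Finset.sum_congr rfl fun i _ => ?_
    ring
  rw [step]
  simp only [key]
  by_cases hab : a = b
  · subst hab
    simp [Matrix.one_apply, Matrix.trace, Matrix.diag, Finset.sum_ite_eq,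
      Finset.sum_div, div_eq_mul_inv, Finset.sum_mul]
  · simp [hab, Matrix.one_apply]

lemma quad_form {n : ℕ} (B : Matrix (Fin n) (Fin n) ℂ) (ψ : Fin n → ℂ) :
    ∑ j, ‖B.mulVec ψ j‖ ^ 2 = ((star ψ) ⬝ᵥ (Bᴴ * B).mulVec ψ).re := by
  have h1 : (star ψ) ⬝ᵥ (Bᴴ * B).mulVec ψ = star (B.mulVec ψ) ⬝ᵥ (B.mulVec ψ) := by
    rw [← Matrix.mulVec_mulVec, Matrix.dotProduct_mulVec, Matrix.star_mulVec]
  rw [h1]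
  rw [dotProduct, Complex.re_sum]
  refine Finset.sum_congr rfl fun j _ => ?_
  simp only [Pi.star_apply, Complex.star_def]
  rw [mul_comm, Complex.mul_conj]
  simp [Complex.normSq_eq_norm_sq, ← Complex.ofReal_pow]

lemma per_i {n : ℕ} (U Ut : Matrix (Fin n) (Fin n) ℂ)
    (hU : U ∈ Matrix.unitaryGroup (Fin n) ℂ)
    (hUt : Ut ∈ Matrix.unitaryGroup (Fin n) ℂ)
    (W : Matrix (Fin n) (Fin n) ℂ)
    (hW : W ∈ Matrix.unitaryGroup (Fin n) ℂ) :
    ((U * W * Uᴴ)ᴴ * Ut * W - U)ᴴ * ((U * W * Uᴴ)ᴴ * Ut * W - U)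
      = (2 : ℂ) • 1 - Wᴴ * ((Uᴴ * Ut)ᴴ + Uᴴ * Ut) * W := by
  have hU1 : Uᴴ * U = 1 := by
    have := (Matrix.mem_unitaryGroup_iff'.mp hU)
    simpa [Matrix.star_eq_conjTranspose] using this
  have hU2 : U * Uᴴ = 1 := by
    have := (Matrix.mem_unitaryGroup_iff.mp hU)
    simpa [Matrix.star_eq_conjTranspose] using this
  have hUt1 : Utᴴ * Ut = 1 := by
    have := (Matrix.mem_unitaryGroup_iff'.mp hUt)
    simpa [Matrix.star_eq_conjTranspose] using this
  have hW1 : Wᴴ * W = 1 := by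
    have := (Matrix.mem_unitaryGroup_iff'.mp hW)
    simpa [Matrix.star_eq_conjTranspose] using this
  have hW2 : W * Wᴴ = 1 := by
    have := (Matrix.mem_unitaryGroup_iff.mp hW)
    simpa [Matrix.star_eq_conjTranspose] using this
  set M := Uᴴ * Ut with hM
  have hA : (U * W * Uᴴ)ᴴ * Ut * W - U = U * (Wᴴ * M * W - 1) := by
    simp only [conjTranspose_mul, conjTranspose_conjTranspose, hM]
    rw [Matrix.mul_sub, Matrix.mul_one]
    congr 1
    noncomm_ring
  rw [hA]
  rw [conjTranspose_mul]
  have : (Wᴴ * M * W - 1)ᴴ * Uᴴ * (U * (Wᴴ * M * W - 1))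
      = (Wᴴ * M * W - 1)ᴴ * (Uᴴ * U) * (Wᴴ * M * W - 1) := by noncomm_ring
  rw [this, hU1, Matrix.mul_one]
  have hBt : (Wᴴ * M * W - 1)ᴴ = Wᴴ * Mᴴ * W - 1 := by
    simp [conjTranspose_mul, conjTranspose_conjTranspose, Matrix.mul_assoc]
  rw [hBt]
  have hMM : Mᴴ * M = 1 := by
    rw [hM, conjTranspose_mul, conjTranspose_conjTranspose]
    calc Utᴴ * U * (Uᴴ * Ut) = Utᴴ * (U * Uᴴ) * Ut := by
          noncomm_ring
    _ = 1 := by rw [hU2, Matrix.mul_one, hUt1]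
  have key : (Wᴴ * Mᴴ * W) * (Wᴴ * M * W) = 1 := by
    calc (Wᴴ * Mᴴ * W) * (Wᴴ * M * W) = Wᴴ * Mᴴ * (W * Wᴴ) * M * W := by noncomm_ring
    _ = Wᴴ * (Mᴴ * M) * W := by rw [hW2]; noncomm_ring
    _ = 1 := by rw [hMM, Matrix.mul_one, hW1]
  have expand : (Wᴴ * Mᴴ * W - 1) * (Wᴴ * M * W - 1)
      = (Wᴴ * Mᴴ * W) * (Wᴴ * M * W) - Wᴴ * Mᴴ * W - Wᴴ * M * W + 1 := by
    noncomm_ring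
  rw [expand, key]
  have : Wᴴ * (Mᴴ + M) * W = Wᴴ * Mᴴ * W + Wᴴ * M * W := by noncomm_ring
  rw [this]
  have h2 : (2 : ℂ) • (1 : Matrix (Fin n) (Fin n) ℂ) = 1 + 1 := by
    rw [two_smul]
  rw [h2]
  abel

/-- Derandomized reduction: If the uniform distribution over unitaries
`V_1, …, V_k` is a unitary 1-design and `‖Ũ − U‖_F² / n ≤ ε`, then with
`V' = ∑ i |i⟩⟨i| ⊗ V i`, `V̂' = ∑ i |i⟩⟨i| ⊗ U V_i U†`, and `U' = V̂'† (I ⊗ Ũ) V'`,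
the error of `U'` on `(1/√k) ∑ i |i⟩ ⊗ ψ` is at most `ε` for every unit vector `ψ`. -/
theorem stmt5 {n k : ℕ} (hn : 0 < n) (hk : 0 < k)
    (U Ut : Matrix (Fin n) (Fin n) ℂ)
    (hU : U ∈ Matrix.unitaryGroup (Fin n) ℂ)
    (hUt : Ut ∈ Matrix.unitaryGroup (Fin n) ℂ)
    (ε : ℝ) (hε : 0 < ε)
    (hfrob : ((Ut - U)ᴴ * (Ut - U)).trace.re ≤ ε * n)
    (V : Fin k → Matrix (Fin n) (Fin n) ℂ)
    (hV : ∀ i, V i ∈ Matrix.unitaryGroup (Fin n) ℂ)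
    (hdesign : ∀ X : Matrix (Fin n) (Fin n) ℂ,
      ((k : ℂ))⁻¹ • ∑ i, (V i * X * (V i)ᴴ) =
        (X.trace / n) • (1 : Matrix (Fin n) (Fin n) ℂ))
    (ψ : Fin n → ℂ) (hψ : ∑ j, ‖ψ j‖ ^ 2 = 1) :
    ∑ q : Fin k × Fin n,
      ‖(((ctrlOp (fun i => U * V i * Uᴴ))ᴴ * ctrlOp (fun _ => Ut) * ctrlOp V
          - ctrlOp (fun _ => U)).mulVec
          (fun p => (1 / Real.sqrt k : ℝ) * ψ p.2)) q‖ ^ 2 ≤ ε := by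
  have hkR : (0:ℝ) < k := by exact_mod_cast hk
  have hnR : (0:ℝ) < n := by exact_mod_cast hn
  have hkC : (k:ℂ) ≠ 0 := by exact_mod_cast hkR.ne'
  set M := Uᴴ * Ut with hM
  set t := M.trace with ht
  set A : Fin k → Matrix (Fin n) (Fin n) ℂ :=
    fun i => (U * V i * Uᴴ)ᴴ * Ut * V i - U with hA
  set c : ℝ := 1 / Real.sqrt k with hc
  -- rewrite the big matrix as a ctrlOp
  have hD : (ctrlOp (fun i => U * V i * Uᴴ))ᴴ * ctrlOp (fun _ : Fin k => Ut) * ctrlOp V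
      - ctrlOp (fun _ : Fin k => U) = ctrlOp A := by
    rw [ctrlOp_conjT, ctrlOp_mul, ctrlOp_mul, ctrlOp_sub]
  rw [hD]
  -- mulVec componentwise
  have hvec : ∀ i j, (ctrlOp A).mulVec (fun p => (c:ℂ) * ψ p.2) (i, j)
      = (c:ℂ) * ((A i).mulVec ψ j) := by
    intro i j
    rw [ctrlOp_mulVec]
    rw [Matrix.mulVec, dotProduct, Finset.mul_sum]
    exact Finset.sum_congr rfl fun j' _ => by ring
  have hc0 : 0 ≤ c := by positivity
  -- the sum of V_i†(M† + M)V_i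
  have hsum : ∑ i, (A i)ᴴ * (A i)
      = ((2*(k:ℂ)) - (k:ℂ) * (((Mᴴ + M).trace / n))) • 1 := by
    have hper : ∀ i, (A i)ᴴ * (A i) = (2:ℂ) • 1 - (V i)ᴴ * (Mᴴ + M) * (V i) := by
      intro i
      exact per_i U Ut hU hUt (V i) (hV i)
    have hdual := dual_design V hdesign (Mᴴ + M)
    have hdual' : ∑ i, ((V i)ᴴ * (Mᴴ + M) * V i)
        = (k:ℂ) • (((Mᴴ + M).trace / n) • (1 : Matrix (Fin n) (Fin n) ℂ)) := by
      rw [← hdual, smul_smul, mul_inv_cancel₀ hkC, one_smul]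
    simp only [hper]
    rw [Finset.sum_sub_distrib, hdual', Finset.sum_const, Finset.card_univ,
      Fintype.card_fin]
    have hnsmul : (k : ℕ) • ((2:ℂ) • (1 : Matrix (Fin n) (Fin n) ℂ))
        = ((2:ℂ) * k) • 1 := by
      rw [← Nat.cast_smul_eq_nsmul ℂ, smul_smul]
      congr 1
      ring
    rw [hnsmul, smul_smul, ← sub_smul]
  -- trace of M† + M
  have htM : (Mᴴ + M).trace = ((2 * t.re : ℝ) : ℂ) := by
    rw [Matrix.trace_add, Matrix.trace_conjTranspose, ← ht]
    rw [add_comm]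
    simpa using Complex.add_conj t
  -- star ψ ⬝ᵥ ψ = 1
  have hpsi : (star ψ) ⬝ᵥ ψ = 1 := by
    have : (star ψ) ⬝ᵥ ψ = ((∑ j, ‖ψ j‖ ^ 2 : ℝ) : ℂ) := by
      rw [dotProduct]
      push_cast
      refine Finset.sum_congr rfl fun j _ => ?_
      simp only [Pi.star_apply, Complex.star_def]
      rw [mul_comm, Complex.mul_conj]
      simp [Complex.normSq_eq_norm_sq, ← Complex.ofReal_pow]
    rw [this, hψ]
    norm_num
  -- compute the total sum
  have hc2 : c ^ 2 = 1 / k := by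
    rw [hc, div_pow, one_pow, Real.sq_sqrt hkR.le]
  have htotal : ∑ q : Fin k × Fin n,
      ‖(ctrlOp A).mulVec (fun p => (c:ℂ) * ψ p.2) q‖ ^ 2
      = 2 - 2 * t.re / n := by
    rw [Fintype.sum_prod_type]
    have e1 : ∀ i : Fin k, ∑ j, ‖(ctrlOp A).mulVec (fun p => (c:ℂ) * ψ p.2) (i, j)‖ ^ 2
        = c ^ 2 * ((star ψ) ⬝ᵥ ((A i)ᴴ * A i).mulVec ψ).re := by
      intro i
      rw [← quad_form]
      rw [Finset.mul_sum]
      refine Finset.sum_congr rfl fun j _ => ?_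
      rw [hvec i j, norm_mul, Complex.norm_real, Real.norm_eq_abs, abs_of_nonneg hc0,
        mul_pow]
    simp only [e1]
    rw [← Finset.mul_sum]
    have e2 : ∑ i, ((star ψ) ⬝ᵥ ((A i)ᴴ * A i).mulVec ψ).re
        = ((star ψ) ⬝ᵥ (∑ i, (A i)ᴴ * A i).mulVec ψ).re := by
      rw [← Complex.re_sum]
      congr 1
      have h1 : (∑ i, (A i)ᴴ * A i).mulVec ψ = ∑ i, ((A i)ᴴ * A i).mulVec ψ := by
        ext j
        simp only [Matrix.mulVec, dotProduct, Matrix.sum_apply, Finset.sum_mul,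
          Finset.sum_apply]
        rw [Finset.sum_comm]
      rw [h1]
      simp only [dotProduct, Finset.mul_sum, Finset.sum_apply]
      rw [Finset.sum_comm]
    rw [e2, hsum, htM]
    have e3 : (star ψ) ⬝ᵥ (((2*(k:ℂ)) - (k:ℂ) * (((2 * t.re : ℝ) : ℂ) / n)) • (1 : Matrix (Fin n) (Fin n) ℂ)).mulVec ψ
        = ((2*(k:ℂ)) - (k:ℂ) * (((2 * t.re : ℝ) : ℂ) / n)) * ((star ψ) ⬝ᵥ ψ) := by
      rw [Matrix.smul_mulVec, Matrix.one_mulVec, dotProduct_smul,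
        smul_eq_mul]
    rw [e3, hpsi, mul_one]
    have e4 : ((2*(k:ℂ)) - (k:ℂ) * (((2 * t.re : ℝ) : ℂ) / n))
        = (((2*k - k * (2 * t.re) / n : ℝ)) : ℂ) := by
      push_cast
      ring
    rw [e4, Complex.ofReal_re, hc2]
    field_simp
  rw [htotal]
  -- relate to the Frobenius bound
  have hUt1 : Utᴴ * Ut = 1 := by
    have := (Matrix.mem_unitaryGroup_iff'.mp hUt)
    simpa [Matrix.star_eq_conjTranspose] using this
  have hU1 : Uᴴ * U = 1 := by
    have := (Matrix.mem_unitaryGroup_iff'.mp hU)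
    simpa [Matrix.star_eq_conjTranspose] using this
  have hexp : (Ut - U)ᴴ * (Ut - U) = 1 - Mᴴ - M + 1 := by
    have : (Ut - U)ᴴ * (Ut - U) = Utᴴ * Ut - (Uᴴ * Ut)ᴴ - Uᴴ * Ut + Uᴴ * U := by
      simp only [conjTranspose_sub, conjTranspose_mul, conjTranspose_conjTranspose]
      noncomm_ring
    rw [this, hUt1, hU1, hM]
  have htrace : ((Ut - U)ᴴ * (Ut - U)).trace.re = 2 * n - 2 * t.re := by
    rw [hexp]
    rw [Matrix.trace_add, Matrix.trace_sub, Matrix.trace_sub, Matrix.trace_one,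
      Matrix.trace_conjTranspose, ← ht]
    simp [Complex.add_re, Complex.sub_re, Complex.conj_re]
    ring
  rw [htrace] at hfrob
  -- goal : 2 - 2 * t.re / n ≤ ε
  have : 2 - 2 * t.re / n = (2 * n - 2 * t.re) / n := by
    field_simp
  rw [this, div_le_iff₀ hnR]
  linarith [hfrob]
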